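/- Let G and H be graphs and r ≥ 1 an integer such that G →_r H. Then there is a constant c = c(G,H,r) such that for every positive integer t, the blowup Ramsey number satisfies B_r(G → H; t) ≤ c^t. -/

import Mathlib

/-- The `n`-blowup of a graph: each vertex is replaced by an independent set of `n` vertices,
and each edge by a complete bipartite graph between the corresponding sets. -/
def blowupGraph {V : Type} (G : SimpleGraph V) (n : ℕ) : SimpleGraph (V × Fin n) :=
  SimpleGraph.comap Prod.fst G

/-- The coloring `C` admits a monochromatic copy of `H` in `G`. -/
def HasMonoCopy {V α : Type} (G : SimpleGraph V) (H : SimpleGraph α) {r : ℕ}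
    (C : Sym2 V → Fin r) : Prop :=
  ∃ (f : α → V) (c : Fin r), Function.Injective f ∧
    ∀ a b, H.Adj a b → G.Adj (f a) (f b) ∧ C s(f a, f b) = c

/-- `G →_r H`: every `r`-coloring of the edges of `G` contains a monochromatic copy of `H`. -/
def ArrowsFor {V α : Type} (G : SimpleGraph V) (H : SimpleGraph α) (r : ℕ) : Prop :=
  ∀ C : Sym2 V → Fin r, HasMonoCopy G H C

/-- The coloring `C` of `G[n]` admits a monochromatic canonical copy of `H[t]`:
an embedding `φ` of `H` into `G`, together with `t` blowup vertices `ψ a` in the part indexed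
by `φ a` for each vertex `a` of `H`, all of whose blowup edges receive the same color `c`. -/
def HasMonoCanonicalBlowup {V α : Type} (G : SimpleGraph V) (H : SimpleGraph α)
    (n t r : ℕ) (C : Sym2 (V × Fin n) → Fin r) : Prop :=
  ∃ (φ : α → V) (ψ : α → Fin t → Fin n) (c : Fin r),
    Function.Injective φ ∧ (∀ a, Function.Injective (ψ a)) ∧
    ∀ a b, H.Adj a b → G.Adj (φ a) (φ b) ∧ ∀ i j, C s((φ a, ψ a i), (φ b, ψ b j)) = c

/-- Every `r`-coloring of the edges of `G[n]` contains a monochromatic canonical copy of `H[t]`.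
The blowup Ramsey number `B_r(G → H; t)` is the minimum such `n`. -/
def BlowupArrow {V α : Type} (G : SimpleGraph V) (H : SimpleGraph α) (r n t : ℕ) : Prop :=
  ∀ C : Sym2 (V × Fin n) → Fin r, HasMonoCanonicalBlowup G H n t r C

open Finset Function

namespace SouzaProof

variable {V α : Type} [Fintype α] [Fintype V]

section Engine

variable (G : SimpleGraph V) (H : SimpleGraph α) {r n : ℕ}
  (C : Sym2 (V × Fin n) → Fin r)

/-- The qualified families: injective graph homomorphisms `H → G`. -/
def Qual (φ : α → V) : Prop :=
  Function.Injective φ ∧ ∀ a b, H.Adj a b → G.Adj (φ a) (φ b)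

open scoped Classical in
/-- The monochromatic copies of `H` (colored `c`, positioned by `φ`) inside the product
region `∏ S`. -/
noncomputable def CP (φ : α → V) (c : Fin r) (S : V → Finset (Fin n)) :
    Finset (α → Fin n) :=
  (Fintype.piFinset fun a => S (φ a)).filter fun x =>
    ∀ a b, H.Adj a b → C s((φ a, x a), (φ b, x b)) = c

open scoped Classical in
lemma refresh (hGH : ArrowsFor G H r) {m : ℕ} (hm : 0 < m) (S : V → Finset (Fin n))
    (hsz : ∀ v, (S v).card = m) (y0 : Fin n) :
    ∃ (φ : α → V) (c : Fin r), Qual G H φ ∧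
      m ^ Fintype.card α ≤ (Fintype.card V ^ Fintype.card α * r) * (CP H C φ c S).card := by
  classical
  set k := Fintype.card α with hk
  set P := Fintype.card V ^ k * r with hP
  have hchoose : ∀ g : V → Fin n, ∃ (φ : α → V) (c : Fin r), Qual G H φ ∧
      ∀ a b, H.Adj a b → C s((φ a, g (φ a)), (φ b, g (φ b))) = c := by
    intro g
    obtain ⟨f, c, hinj, hcopy⟩ := hGH (Sym2.lift ⟨fun u v => C s((u, g u), (v, g v)), by
      intro u v
      show C s((u, g u), (v, g v)) = C s((v, g v), (u, g u))
      rw [Sym2.eq_swap]⟩)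
    exact ⟨f, c, ⟨hinj, fun a b hab => (hcopy a b hab).1⟩, fun a b hab => by
      simpa using (hcopy a b hab).2⟩
  choose Φ ξ hQ hcol using hchoose
  set T : Finset (V → Fin n) := Fintype.piFinset fun v => S v with hT
  have hTcard : T.card = m ^ Fintype.card V := by
    simp [hT, Fintype.card_piFinset, hsz]
  set F : (V → Fin n) → (α → V) × Fin r := fun g => (Φ g, ξ g) with hF
  set Fams : Finset ((α → V) × Fin r) := univ.filter fun p => Qual G H p.1 with hFams
  have hmaps : ∀ g ∈ T, F g ∈ Fams := fun g _ => by simp [hFams, hF, hQ g]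
  have hfib : T.card = ∑ f ∈ Fams, (T.filter fun g => F g = f).card :=
    Finset.card_eq_sum_card_fiberwise hmaps
  have hfibbound : ∀ f ∈ Fams,
      (T.filter fun g => F g = f).card ≤ (CP H C f.1 f.2 S).card * m ^ (Fintype.card V - k) := by
    rintro ⟨φ, c⟩ hf
    have hQf : Qual G H φ := by simpa [hFams] using hf
    set K : Finset V := univ.image φ with hK
    have hKcard : K.card = k := by
      rw [hK, Finset.card_image_of_injective _ hQf.1, card_univ]
    have hinjcard : (T.filter fun g => F g = (φ, c)).card ≤
        ((CP H C φ c S) ×ˢ Fintype.piFinset fun v => if v ∈ K then {y0} else S v).card := by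
      apply Finset.card_le_card_of_injOn
        (fun g => (fun a => g (φ a), fun v => if v ∈ K then y0 else g v))
      · intro g hg
        simp only [Finset.mem_coe] at hg ⊢
        rw [Finset.mem_filter] at hg
        obtain ⟨hgT, hgF⟩ := hg
        have hΦ : Φ g = φ := congrArg Prod.fst hgF
        have hξ : ξ g = c := congrArg Prod.snd hgF
        rw [Finset.mem_product]
        refine ⟨?_, ?_⟩
        · rw [CP, Finset.mem_filter]
          refine ⟨Fintype.mem_piFinset.2 fun a => (Fintype.mem_piFinset.1 hgT) (φ a), ?_⟩
          intro a b hab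
          have := hcol g a b hab
          rwa [hΦ, hξ] at this
        · rw [Fintype.mem_piFinset]
          intro v
          by_cases hv : v ∈ K <;> simp [hv, (Fintype.mem_piFinset.1 hgT) v]
      · intro g1 h1 g2 h2 heq
        have e1 := congrArg Prod.fst heq
        have e2 := congrArg Prod.snd heq
        simp only at e1 e2
        funext v
        by_cases hv : v ∈ K
        · obtain ⟨a, _, rfl⟩ := Finset.mem_image.1 hv
          exact congrFun e1 a
        · have := congrFun e2 v
          simpa [hv] using this
    refine hinjcard.trans ?_
    rw [Finset.card_product, Fintype.card_piFinset]
    apply Nat.mul_le_mul_left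
    have hcards : ∀ v, (if v ∈ K then ({y0} : Finset (Fin n)) else S v).card
        = if v ∈ K then 1 else m := by
      intro v; split <;> simp [hsz]
    rw [Finset.prod_congr rfl fun v _ => hcards v, ← Finset.prod_mul_prod_compl K,
      Finset.prod_congr rfl (fun v hv => if_pos hv), Finset.prod_const_one, one_mul,
      Finset.prod_congr rfl (fun v hv => if_neg (Finset.mem_compl.1 hv)), Finset.prod_const,
      Finset.card_compl, hKcard]
  by_contra hcon
  push_neg at hcon
  have hFamsP : Fams.card ≤ P := by
    calc Fams.card ≤ (univ : Finset ((α → V) × Fin r)).card := Finset.card_filter_le _ _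
      _ = P := by
        rw [card_univ, Fintype.card_prod, Fintype.card_fun, Fintype.card_fin, hP, hk]
  have hsum : m ^ Fintype.card V ≤ ∑ f ∈ Fams, (CP H C f.1 f.2 S).card * m ^ (Fintype.card V - k) := by
    rw [← hTcard, hfib]
    exact Finset.sum_le_sum hfibbound
  rcases Fams.eq_empty_or_nonempty with hemp | ⟨f0, hf0⟩
  · rw [hemp, Finset.sum_empty] at hsum
    have : 0 < m ^ Fintype.card V := pow_pos hm _
    omega
  · have hkV : k ≤ Fintype.card V := by
      have hQf : Qual G H f0.1 := by simpa [hFams] using hf0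
      exact hk ▸ Fintype.card_le_of_injective _ hQf.1
    have hsmall : ∀ f ∈ Fams, P * (CP H C f.1 f.2 S).card < m ^ k := by
      intro f hf
      have hQf : Qual G H f.1 := by simpa [hFams] using hf
      have := hcon f.1 f.2 hQf
      omega
    have key : P * m ^ Fintype.card V ≤ Fams.card * ((m ^ k - 1) * m ^ (Fintype.card V - k)) := by
      calc P * m ^ Fintype.card V ≤
          ∑ f ∈ Fams, P * ((CP H C f.1 f.2 S).card * m ^ (Fintype.card V - k)) := by
            rw [← Finset.mul_sum]; exact Nat.mul_le_mul_left _ hsum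
        _ ≤ ∑ _f ∈ Fams, (m ^ k - 1) * m ^ (Fintype.card V - k) := by
            apply Finset.sum_le_sum
            intro f hf
            rw [← mul_assoc]
            exact Nat.mul_le_mul_right _ (by have := hsmall f hf; omega)
        _ = Fams.card * ((m ^ k - 1) * m ^ (Fintype.card V - k)) := by
            rw [Finset.sum_const, smul_eq_mul]
    have hpowsplit : m ^ k * m ^ (Fintype.card V - k) = m ^ Fintype.card V := by
      rw [← pow_add]
      congr 1
      omega
    have hppos : 0 < P := by
      rw [hP]
      apply Nat.mul_pos
      · rcases Nat.eq_zero_or_pos k with hk0 | hkpos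
        · rw [hk0, pow_zero]; exact Nat.one_pos
        · have hα : Nonempty α := Fintype.card_pos_iff.1 (hk ▸ hkpos)
          have hV : Nonempty V := ⟨f0.1 hα.some⟩
          exact pow_pos Fintype.card_pos _
      · exact Fin.pos f0.2
    have hsub : (m ^ k - 1) * m ^ (Fintype.card V - k)
        = m ^ Fintype.card V - m ^ (Fintype.card V - k) := by
      rw [Nat.sub_mul, one_mul, hpowsplit]
    have hfinal : P * m ^ Fintype.card V ≤ P * (m ^ Fintype.card V - m ^ (Fintype.card V - k)) := by
      calc P * m ^ Fintype.card V ≤ Fams.card * ((m ^ k - 1) * m ^ (Fintype.card V - k)) := key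
        _ ≤ P * ((m ^ k - 1) * m ^ (Fintype.card V - k)) := Nat.mul_le_mul_right _ hFamsP
        _ = P * (m ^ Fintype.card V - m ^ (Fintype.card V - k)) := by rw [hsub]
    have h1 : 0 < m ^ (Fintype.card V - k) := pow_pos hm _
    have h2 : m ^ (Fintype.card V - k) ≤ m ^ Fintype.card V :=
      Nat.pow_le_pow_right hm (by omega)
    have hlt := (Nat.mul_lt_mul_left hppos).2 (Nat.sub_lt_self h1 h2)
    exact lt_irrefl _ (hfinal.trans_lt hlt)

open scoped Classical in
lemma drc {m t : ℕ} (ht : 1 ≤ t) (y0 : Fin n) {P : ℕ} (hPpos : 0 < P)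
    (S : V → Finset (Fin n)) (hsz : ∀ v, (S v).card = m)
    {φ : α → V} {c : Fin r} (hφ : Function.Injective φ) (astar : α)
    (hcp : m ^ Fintype.card α ≤ P * (CP H C φ c S).card)
    (hm2 : 2 * t ^ 2 * P ^ (t + 1) ≤ m) :
    ∃ T : Finset (Fin n), T ⊆ S (φ astar) ∧ T.card = t ∧
      ∃ S' : V → Finset (Fin n), (∀ v, S' v ⊆ S v) ∧
        (∀ v, (S' v).card = m / (2 * P ^ (t + 1))) ∧
        ∀ b, H.Adj astar b → ∀ i ∈ T, ∀ y ∈ S' (φ b), C s((φ astar, i), (φ b, y)) = c := by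
  classical
  have hm0 : 0 < m := lt_of_lt_of_le (by positivity) hm2
  set k := Fintype.card α with hk
  have hk1 : 1 ≤ k := hk ▸ (Fintype.card_pos_iff.2 ⟨astar⟩)
  set A := S (φ astar) with hA
  set CPf := CP H C φ c S with hCPf
  have hCPle : CPf.card ≤ m ^ k := by
    calc CPf.card ≤ (Fintype.piFinset fun a => S (φ a)).card := Finset.card_filter_le _ _
      _ = m ^ k := by simp [Fintype.card_piFinset, hsz, hk]
  have hCPpos : 0 < CPf.card := by
    rcases Nat.eq_zero_or_pos CPf.card with h0 | h
    · rw [h0, Nat.mul_zero] at hcp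
      have : 0 < m ^ k := pow_pos hm0 _
      omega
    · exact h
  set D : (α → Fin n) → Finset (Fin n) :=
    fun x => A.filter fun y => ∀ b, H.Adj astar b → C s((φ astar, y), (φ b, x b)) = c with hD
  set ρ : (α → Fin n) → (α → Fin n) := fun x => Function.update x astar y0 with hρ
  set E := CPf.image ρ with hE
  have hupdne : ∀ (x : α → Fin n) (b : α), H.Adj astar b → ρ x b = x b := by
    intro x b hb
    exact Function.update_of_ne (fun h => (H.ne_of_adj hb) h.symm) _ _
  have hDρ : ∀ x, D (ρ x) = D x := by
    intro x
    refine Finset.filter_congr fun y _ => ?_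
    constructor
    · intro h b hb
      rw [← hupdne x b hb]
      exact h b hb
    · intro h b hb
      rw [hupdne x b hb]
      exact h b hb
  have hDsub : ∀ x, D x ⊆ A := fun x => Finset.filter_subset _ _
  -- membership facts for CPf
  have hCPmem : ∀ x ∈ CPf, (∀ a, x a ∈ S (φ a)) ∧
      ∀ a b, H.Adj a b → C s((φ a, x a), (φ b, x b)) = c := by
    intro x hx
    rw [hCPf, CP, Finset.mem_filter, Fintype.mem_piFinset] at hx
    exact hx
  have hCPmem' : ∀ x, (∀ a, x a ∈ S (φ a)) →
      (∀ a b, H.Adj a b → C s((φ a, x a), (φ b, x b)) = c) → x ∈ CPf := by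
    intro x h1 h2
    rw [hCPf, CP, Finset.mem_filter, Fintype.mem_piFinset]
    exact ⟨h1, h2⟩
  -- (2) fiber cardinality
  have hfibcard : ∀ e ∈ E, (CPf.filter fun x => ρ x = e).card = (D e).card := by
    intro e he
    obtain ⟨x0, hx0, he0⟩ := Finset.mem_image.1 he
    have he_astar : e astar = y0 := by rw [← he0]; exact Function.update_self _ _ _
    have he_other : ∀ a, a ≠ astar → e a = x0 a := by
      intro a ha
      rw [← he0]
      exact Function.update_of_ne ha _ _
    refine Finset.card_bij (fun x _ => x astar) ?_ ?_ ?_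
    · intro x hx
      rw [Finset.mem_filter] at hx
      obtain ⟨hxCP, hxρ⟩ := hx
      obtain ⟨hxS, hxcol⟩ := hCPmem x hxCP
      rw [hD]
      rw [Finset.mem_filter]
      refine ⟨hxS astar, fun b hb => ?_⟩
      have hba : b ≠ astar := fun h => (H.ne_of_adj hb) h.symm
      have : e b = x b := by rw [← hxρ]; exact Function.update_of_ne hba _ _
      rw [this]
      exact hxcol astar b hb
    · intro x1 hx1 x2 hx2 hval
      rw [Finset.mem_filter] at hx1 hx2
      funext a
      by_cases ha : a = astar
      · rw [ha]; exact hval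
      · have e1 : ρ x1 a = ρ x2 a := by rw [hx1.2, hx2.2]
        simp only [hρ] at e1
        rwa [Function.update_of_ne ha, Function.update_of_ne ha] at e1
    · intro y hy
      rw [hD, Finset.mem_filter] at hy
      obtain ⟨hyA, hycol⟩ := hy
      refine ⟨Function.update e astar y, ?_, Function.update_self _ _ _⟩
      rw [Finset.mem_filter]
      constructor
      · apply hCPmem'
        · intro a
          by_cases ha : a = astar
          · rw [ha, Function.update_self]; exact hyA
          · rw [Function.update_of_ne ha, he_other a ha]
            exact (hCPmem x0 hx0).1 a
        · intro a b hab
          by_cases ha : a = astar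
          · rw [ha] at hab ⊢
            have hba : b ≠ astar := fun h => (H.ne_of_adj hab) h.symm
            rw [Function.update_self, Function.update_of_ne hba]
            exact hycol b hab
          · by_cases hb : b = astar
            · rw [hb] at hab ⊢
              rw [Function.update_of_ne ha, Function.update_self, Sym2.eq_swap]
              exact hycol a hab.symm
            · rw [Function.update_of_ne ha, Function.update_of_ne hb,
                he_other a ha, he_other b hb]
              exact (hCPmem x0 hx0).2 a b hab
      · rw [hρ]
        show Function.update (Function.update e astar y) astar y0 = e
        rw [Function.update_idem, ← he_astar, Function.update_eq_self]
  -- (3)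
  have hsumfib : CPf.card = ∑ e ∈ E, (D e).card := by
    rw [Finset.card_eq_sum_card_fiberwise (fun x hx => Finset.mem_image_of_mem ρ hx)]
    exact Finset.sum_congr rfl hfibcard
  -- (4)
  have hsumpow : ∑ x ∈ CPf, (D x).card ^ t = ∑ e ∈ E, (D e).card ^ (t + 1) := by
    rw [← Finset.sum_fiberwise_of_maps_to (fun x hx => Finset.mem_image_of_mem ρ hx)
      (fun x => (D x).card ^ t)]
    refine Finset.sum_congr rfl fun e he => ?_
    have : ∀ x ∈ CPf.filter (fun x => ρ x = e), (D x).card ^ t = (D e).card ^ t := by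
      intro x hx
      rw [Finset.mem_filter] at hx
      rw [← hx.2, hDρ]
    rw [Finset.sum_congr rfl this, Finset.sum_const, hfibcard e he, smul_eq_mul, ← pow_succ']
  -- (5) tuples and double counting
  set W : Finset (Fin t → Fin n) := Fintype.piFinset fun _ => A with hWdef
  have hWcard : W.card = m ^ t := by
    simp [hWdef, Fintype.card_piFinset, hA, hsz]
  set M : (Fin t → Fin n) → ℕ := fun w => (CPf.filter fun x => ∀ i, w i ∈ D x).card with hM
  have hMle : ∀ w, M w ≤ m ^ k := fun w => (Finset.card_filter_le _ _).trans hCPle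
  have hdouble : ∑ w ∈ W, M w = ∑ x ∈ CPf, (D x).card ^ t := by
    rw [hM]
    simp only [Finset.card_filter]
    rw [Finset.sum_comm]
    refine Finset.sum_congr rfl fun x hx => ?_
    have hset : W.filter (fun w => ∀ i, w i ∈ D x) = Fintype.piFinset fun _ : Fin t => D x := by
      ext w
      simp only [Finset.mem_filter, Fintype.mem_piFinset, hWdef]
      exact ⟨fun h => h.2, fun h => ⟨fun i => hDsub x (h i), h⟩⟩
    rw [← Finset.card_filter, hset]
    simp [Fintype.card_piFinset]
  -- (6) size of E
  have hEcard : E.card ≤ m ^ (k - 1) := by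
    have hEsub : E ⊆ Fintype.piFinset
        fun a => if a = astar then ({y0} : Finset (Fin n)) else S (φ a) := by
      intro e he
      obtain ⟨x0, hx0, rfl⟩ := Finset.mem_image.1 he
      rw [Fintype.mem_piFinset]
      intro a
      by_cases ha : a = astar
      · rw [ha]
        simp [hρ]
      · simp only [if_neg ha]
        have hrx : ρ x0 a = x0 a := by
          simp only [hρ]
          exact Function.update_of_ne ha _ _
        rw [hrx]
        exact (hCPmem x0 hx0).1 a
    refine (Finset.card_le_card hEsub).trans ?_
    rw [Fintype.card_piFinset]
    have h1 : ∀ a : α, (if a = astar then ({y0} : Finset (Fin n)) else S (φ a)).card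
        = if a = astar then 1 else m := by intro a; split <;> simp [hsz]
    rw [Finset.prod_congr rfl fun a _ => h1 a,
      ← Finset.mul_prod_erase univ _ (Finset.mem_univ astar), if_pos rfl, one_mul,
      Finset.prod_congr rfl (fun a ha => if_neg (Finset.ne_of_mem_erase ha)),
      Finset.prod_const, Finset.card_erase_of_mem (Finset.mem_univ _), card_univ]
  have hEpos : 0 < E.card := Finset.card_pos.2 ((Finset.card_pos.1 hCPpos).image ρ)
  -- (7) power-mean inequality, in ℕ
  have hPMnat : CPf.card ^ (t + 1) ≤ E.card ^ t * ∑ e ∈ E, (D e).card ^ (t + 1) := by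
    have hEtpos : (0:ℝ) < (E.card : ℝ) ^ t := by
      apply pow_pos
      exact_mod_cast hEpos
    have h := pow_sum_div_card_le_sum_pow (s := E)
      (f := fun e => ((D e).card : ℝ)) (fun e _ => by positivity) t
    rw [div_le_iff₀ hEtpos] at h
    have h2 : ((CPf.card : ℝ)) ^ (t+1) ≤ (∑ e ∈ E, ((D e).card : ℝ) ^ (t+1)) * (E.card : ℝ) ^ t := by
      calc ((CPf.card : ℝ))^(t+1) = (∑ e ∈ E, ((D e).card : ℝ))^(t+1) := by
            rw [hsumfib]
            push_cast
            rfl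
        _ ≤ _ := h
    rw [mul_comm]
    exact_mod_cast h2
  -- main bound: m^(k+t) ≤ P^(t+1) * ∑_W M
  have hkt : k * (t + 1) = (k + t) + (k - 1) * t := by
    obtain ⟨k', hk'⟩ : ∃ k', k = k' + 1 := ⟨k - 1, by omega⟩
    rw [hk', Nat.add_sub_cancel]
    ring
  have hZeq : ∑ w ∈ W, M w = ∑ e ∈ E, (D e).card ^ (t+1) := by rw [hdouble, hsumpow]
  have hXpos : 0 < (m ^ (k-1)) ^ t := by positivity
  have hmain : m ^ (k + t) ≤ P ^ (t+1) * ∑ w ∈ W, M w := by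
    apply Nat.le_of_mul_le_mul_right ?_ hXpos
    calc m^(k+t) * (m^(k-1))^t = m^(k*(t+1)) := by
          rw [← pow_mul, ← pow_add, hkt]
      _ = (m^k)^(t+1) := by rw [pow_mul]
      _ ≤ (P * CPf.card)^(t+1) := Nat.pow_le_pow_left hcp _
      _ = P^(t+1) * CPf.card^(t+1) := mul_pow _ _ _
      _ ≤ P^(t+1) * (E.card^t * ∑ e ∈ E, (D e).card ^ (t+1)) := Nat.mul_le_mul_left _ hPMnat
      _ ≤ P^(t+1) * ((m^(k-1))^t * ∑ e ∈ E, (D e).card ^ (t+1)) :=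
          Nat.mul_le_mul_left _ (Nat.mul_le_mul_right _ (Nat.pow_le_pow_left hEcard t))
      _ = P^(t+1) * (∑ w ∈ W, M w) * (m^(k-1))^t := by rw [hZeq]; ring
  -- bad tuples
  set Wbad := W.filter (fun w => ¬ Function.Injective w) with hWbad
  have hbadcard : Wbad.card ≤ t^2 * m^(t-1) := by
    have hsub2 : Wbad ⊆ (Finset.univ.filter fun ij : Fin t × Fin t => ij.1 ≠ ij.2).biUnion
        (fun ij => W.filter fun w => w ij.1 = w ij.2) := by
      intro w hw
      rw [hWbad, Finset.mem_filter] at hw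
      obtain ⟨hwW, hwni⟩ := hw
      rw [Function.Injective] at hwni
      push_neg at hwni
      obtain ⟨i, j, hij, hne⟩ := hwni
      exact Finset.mem_biUnion.2 ⟨(i, j), by simp [hne], Finset.mem_filter.2 ⟨hwW, hij⟩⟩
    refine (Finset.card_le_card hsub2).trans (Finset.card_biUnion_le.trans ?_)
    have hper : ∀ ij ∈ (Finset.univ.filter fun ij : Fin t × Fin t => ij.1 ≠ ij.2),
        (W.filter fun w => w ij.1 = w ij.2).card ≤ m ^ (t-1) := by
      rintro ⟨i, j⟩ hij
      have hijne : i ≠ j := by simpa using hij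
      have hinj2 : (W.filter fun w => w i = w j).card ≤
          (Fintype.piFinset fun l : Fin t => if l = i then ({y0} : Finset (Fin n)) else A).card := by
        apply Finset.card_le_card_of_injOn (fun w => Function.update w i y0)
        · intro w hw
          simp only [Finset.mem_coe] at hw ⊢
          rw [Finset.mem_filter] at hw
          rw [Fintype.mem_piFinset]
          intro l
          by_cases hl : l = i
          · rw [hl, Function.update_self]
            simp
          · rw [Function.update_of_ne hl]
            simp only [if_neg hl]
            exact Fintype.mem_piFinset.1 hw.1 l
        · intro w1 h1 w2 h2 heq
          simp only [Finset.mem_coe, Finset.mem_filter] at h1 h2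
          funext l
          by_cases hl : l = i
          · have e1 : w1 j = w2 j := by
              have h3 := congrFun heq j
              dsimp only at h3
              rwa [Function.update_of_ne hijne.symm, Function.update_of_ne hijne.symm] at h3
            rw [hl, h1.2, h2.2]
            exact e1
          · have h3 := congrFun heq l
            dsimp only at h3
            rwa [Function.update_of_ne hl, Function.update_of_ne hl] at h3
      refine hinj2.trans ?_
      rw [Fintype.card_piFinset]
      have h1 : ∀ l : Fin t, (if l = i then ({y0} : Finset (Fin n)) else A).card
          = if l = i then 1 else m := by intro l; split <;> simp [hA, hsz]
      rw [Finset.prod_congr rfl fun l _ => h1 l,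
        ← Finset.mul_prod_erase univ _ (Finset.mem_univ i), if_pos rfl, one_mul,
        Finset.prod_congr rfl (fun l hl => if_neg (Finset.ne_of_mem_erase hl)),
        Finset.prod_const, Finset.card_erase_of_mem (Finset.mem_univ _), card_univ,
        Fintype.card_fin]
    calc ∑ ij ∈ (Finset.univ.filter fun ij : Fin t × Fin t => ij.1 ≠ ij.2),
          (W.filter fun w => w ij.1 = w ij.2).card
        ≤ ∑ _ij ∈ (Finset.univ.filter fun ij : Fin t × Fin t => ij.1 ≠ ij.2), m^(t-1) :=
          Finset.sum_le_sum hper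
      _ = (Finset.univ.filter fun ij : Fin t × Fin t => ij.1 ≠ ij.2).card * m^(t-1) := by
          rw [Finset.sum_const, smul_eq_mul]
      _ ≤ t^2 * m^(t-1) := by
          apply Nat.mul_le_mul_right
          calc (Finset.univ.filter fun ij : Fin t × Fin t => ij.1 ≠ ij.2).card
              ≤ (Finset.univ : Finset (Fin t × Fin t)).card := Finset.card_filter_le _ _
            _ = t^2 := by simp [sq]
  set Wgood := W.filter (fun w => Function.Injective w) with hWgood
  have hsplit : ∑ w ∈ Wgood, M w + ∑ w ∈ Wbad, M w = ∑ w ∈ W, M w := by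
    rw [hWgood, hWbad]
    exact Finset.sum_filter_add_sum_filter_not W _ M
  have hbadsum : ∑ w ∈ Wbad, M w ≤ (t^2 * m^(t-1)) * m^k := by
    calc ∑ w ∈ Wbad, M w ≤ ∑ _w ∈ Wbad, m^k := Finset.sum_le_sum fun w _ => hMle w
      _ = Wbad.card * m^k := by rw [Finset.sum_const, smul_eq_mul]
      _ ≤ (t^2 * m^(t-1)) * m^k := Nat.mul_le_mul_right _ hbadcard
  have hmt1 : m * m^(t-1) = m^t := by
    rw [← pow_succ']
    congr 1
    omega
  have hgoodsum : m ^ (k+t+1) ≤ m * (2 * P^(t+1) * ∑ w ∈ Wgood, M w) := by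
    have h1 : m^(k+t) ≤ P^(t+1) * ∑ w ∈ Wgood, M w + P^(t+1) * ((t^2 * m^(t-1)) * m^k) :=
      calc m^(k+t) ≤ P^(t+1) * ∑ w ∈ W, M w := hmain
        _ = P^(t+1) * (∑ w ∈ Wgood, M w + ∑ w ∈ Wbad, M w) := by rw [hsplit]
        _ = P^(t+1) * ∑ w ∈ Wgood, M w + P^(t+1) * ∑ w ∈ Wbad, M w := by ring
        _ ≤ _ := Nat.add_le_add_left (Nat.mul_le_mul_left _ hbadsum) _
    have h2 : 2*m*m^(k+t) ≤ m * (2*P^(t+1) * ∑ w ∈ Wgood, M w)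
        + (2*t^2*P^(t+1)) * (m * m^(t-1)) * m^k := by
      calc 2*m*m^(k+t)
          ≤ 2*m*(P^(t+1) * ∑ w ∈ Wgood, M w + P^(t+1) * ((t^2 * m^(t-1)) * m^k)) :=
            Nat.mul_le_mul_left _ h1
        _ = m * (2*P^(t+1) * ∑ w ∈ Wgood, M w) + (2*t^2*P^(t+1)) * (m * m^(t-1)) * m^k := by
            ring
    have h3 : (2*t^2*P^(t+1)) * (m * m^(t-1)) * m^k ≤ m * (m^t * m^k) := by
      rw [hmt1]
      calc (2*t^2*P^(t+1)) * m^t * m^k ≤ m * m^t * m^k :=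
            Nat.mul_le_mul_right _ (Nat.mul_le_mul_right _ hm2)
        _ = m * (m^t * m^k) := by ring
    have h4 : 2*m*m^(k+t) = m^(k+t+1) + m^(k+t+1) := by ring
    have h5 : m * (m^t * m^k) = m^(k+t+1) := by ring
    have h6 := h2.trans (Nat.add_le_add_left h3 _)
    rw [h4, h5] at h6
    omega
  -- pigeonhole: a good heavy tuple
  have hex : ∃ w ∈ Wgood, m^k ≤ 2 * P^(t+1) * M w := by
    by_contra hno
    push_neg at hno
    have hsum2 : 2*P^(t+1) * (∑ w ∈ Wgood, M w) + Wgood.card ≤ Wgood.card * m^k := by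
      calc 2*P^(t+1) * (∑ w ∈ Wgood, M w) + Wgood.card
          = ∑ w ∈ Wgood, (2*P^(t+1) * M w + 1) := by
            rw [Finset.sum_add_distrib, ← Finset.mul_sum, Finset.sum_const, smul_eq_mul, mul_one]
        _ ≤ ∑ _w ∈ Wgood, m^k := Finset.sum_le_sum fun w hw => by
            have := hno w hw
            omega
        _ = Wgood.card * m^k := by rw [Finset.sum_const, smul_eq_mul]
    have hWgle : Wgood.card ≤ m^t := by
      calc Wgood.card ≤ W.card := Finset.card_filter_le _ _
        _ = m^t := hWcard
    have hc1 : m * (Wgood.card * m^k) ≤ m^(k+t+1) := by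
      calc m * (Wgood.card * m^k) ≤ m * (m^t * m^k) :=
            Nat.mul_le_mul_left _ (Nat.mul_le_mul_right _ hWgle)
        _ = m^(k+t+1) := by ring
    have hc2 : m^(k+t+1) + m * Wgood.card ≤ m * (Wgood.card * m^k) := by
      calc m^(k+t+1) + m * Wgood.card
          ≤ m * (2 * P^(t+1) * ∑ w ∈ Wgood, M w) + m * Wgood.card :=
            Nat.add_le_add_right hgoodsum _
        _ = m * (2*P^(t+1) * (∑ w ∈ Wgood, M w) + Wgood.card) := by ring
        _ ≤ m * (Wgood.card * m^k) := Nat.mul_le_mul_left _ hsum2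
    have hWg0 : Wgood.card = 0 := by
      have h7 := hc2.trans hc1
      have h8 : m * Wgood.card = 0 := by omega
      exact (Nat.mul_eq_zero.1 h8).resolve_left (by omega)
    have hWgE : Wgood = ∅ := Finset.card_eq_zero.1 hWg0
    rw [hWgE, Finset.sum_empty, Nat.mul_zero, Nat.mul_zero] at hgoodsum
    have : 0 < m^(k+t+1) := pow_pos hm0 _
    omega
  obtain ⟨w, hwWg, hwM⟩ := hex
  rw [hWgood, Finset.mem_filter] at hwWg
  obtain ⟨hwW, hwinj⟩ := hwWg
  have hwA : ∀ i, w i ∈ A := Fintype.mem_piFinset.1 hwW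
  -- the candidate sets
  set Y : V → Finset (Fin n) := fun v => (S v).filter fun y =>
    ∀ b, φ b = v → H.Adj astar b → ∀ i : Fin t, C s((φ astar, w i), (v, y)) = c with hY
  have hYsub : ∀ v, Y v ⊆ S v := fun v => Finset.filter_subset _ _
  have hYsize : ∀ v, m / (2*P^(t+1)) ≤ (Y v).card := by
    intro v
    by_cases hv : ∃ b, φ b = v ∧ H.Adj astar b
    · obtain ⟨b, hbv, hbadj⟩ := hv
      have hMb : M w ≤ (Y v).card * m^(k-1) := by
        rw [hM]
        have hsub3 : CPf.filter (fun x => ∀ i, w i ∈ D x) ⊆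
            Fintype.piFinset fun a => if a = b then Y v else S (φ a) := by
          intro x hx
          rw [Finset.mem_filter] at hx
          obtain ⟨hxCP, hxw⟩ := hx
          rw [Fintype.mem_piFinset]
          intro a
          by_cases ha : a = b
          · rw [ha, if_pos rfl, hY]
            rw [Finset.mem_filter]
            constructor
            · rw [← hbv]
              exact (hCPmem x hxCP).1 b
            · intro b' hb'v hb'adj i
              have h9 := hxw i
              rw [hD, Finset.mem_filter] at h9
              have h10 := h9.2 b hbadj
              rw [hbv] at h10
              exact h10
          · rw [if_neg ha]
            exact (hCPmem x hxCP).1 a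
        refine (Finset.card_le_card hsub3).trans ?_
        rw [Fintype.card_piFinset]
        have h1 : ∀ a : α, (if a = b then Y v else S (φ a)).card
            = if a = b then (Y v).card else m := by intro a; split <;> simp [hsz]
        rw [Finset.prod_congr rfl fun a _ => h1 a,
          ← Finset.mul_prod_erase univ _ (Finset.mem_univ b), if_pos rfl,
          Finset.prod_congr rfl (fun a ha => if_neg (Finset.ne_of_mem_erase ha)),
          Finset.prod_const, Finset.card_erase_of_mem (Finset.mem_univ _), card_univ]
      have h5 : m ≤ 2*P^(t+1) * (Y v).card := by
        have hpos : 0 < m^(k-1) := pow_pos hm0 _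
        apply Nat.le_of_mul_le_mul_right ?_ hpos
        calc m * m^(k-1) = m^k := by
              rw [← pow_succ']
              congr 1
              omega
          _ ≤ 2*P^(t+1) * M w := hwM
          _ ≤ 2*P^(t+1) * ((Y v).card * m^(k-1)) := Nat.mul_le_mul_left _ hMb
          _ = (2*P^(t+1) * (Y v).card) * m^(k-1) := by ring
      calc m / (2*P^(t+1)) ≤ (2*P^(t+1) * (Y v).card) / (2*P^(t+1)) := Nat.div_le_div_right h5
        _ = (Y v).card := Nat.mul_div_cancel_left _ (by positivity)
    · have hYeq : Y v = S v := by
        rw [hY]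
        apply Finset.filter_true_of_mem
        intro y hy b hbv hbadj
        exact absurd ⟨b, hbv, hbadj⟩ hv
      rw [hYeq, hsz]
      exact Nat.div_le_self _ _
  choose S' hS'sub hS'card using fun v =>
    Finset.exists_subset_card_eq (hYsize v)
  refine ⟨Finset.image w Finset.univ, ?_, ?_, S', ?_, hS'card, ?_⟩
  · rw [Finset.image_subset_iff]
    exact fun i _ => hwA i
  · rw [Finset.card_image_of_injective _ hwinj, card_univ, Fintype.card_fin]
  · exact fun v => (hS'sub v).trans (hYsub v)
  · intro b hbadj i hiT y hyS'
    obtain ⟨i0, _, rfl⟩ := Finset.mem_image.1 hiT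
    have hyY : y ∈ Y (φ b) := hS'sub (φ b) hyS'
    rw [hY, Finset.mem_filter] at hyY
    exact hyY.2 b rfl hbadj i0

open scoped Classical in
lemma extract {t : ℕ} (f : (α → V) × Fin r) (hQ : Qual G H f.1)
    (Tm : α → Finset (Fin n)) (hcards : ∀ a, (Tm a).card = t)
    (hcol : ∀ a b, H.Adj a b → ∀ i ∈ Tm a, ∀ j ∈ Tm b, C s((f.1 a, i), (f.1 b, j)) = f.2) :
    HasMonoCanonicalBlowup G H n t r C := by
  refine ⟨f.1, fun a i => ((Tm a).orderIsoOfFin (hcards a) i : Fin n), f.2, hQ.1, ?_, ?_⟩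
  · intro a i j hij
    exact ((Tm a).orderIsoOfFin (hcards a)).injective (Subtype.coe_injective hij)
  · intro a b hab
    refine ⟨hQ.2 a b hab, fun i j => ?_⟩
    exact hcol a b hab _ ((Tm a).orderIsoOfFin (hcards a) i).2 _
      ((Tm b).orderIsoOfFin (hcards b) j).2

open scoped Classical in
lemma main_ind (hGH : ArrowsFor G H r) (y0 : Fin n) {t : ℕ} (ht : 1 ≤ t)
    (P : ℕ) (hPdef : P = Fintype.card V ^ Fintype.card α * r) (hPpos : 0 < P) :
    ∀ (j m : ℕ) (S : V → Finset (Fin n)) (Tm : ((α → V) × Fin r) → α → Finset (Fin n))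
      (D : ((α → V) × Fin r) → Finset α),
      (∀ v, (S v).card = m) →
      (∀ f a, a ∈ D f → (Tm f a).card = t) →
      (∀ f, (D f).Nonempty → Qual G H f.1) →
      (∀ f, ∀ a ∈ D f, ∀ b, H.Adj a b → ∀ i ∈ Tm f a, ∀ y ∈ S (f.1 b),
        C s((f.1 a, i), (f.1 b, y)) = f.2) →
      (∀ f, ∀ a ∈ D f, ∀ b ∈ D f, H.Adj a b → ∀ i ∈ Tm f a, ∀ j ∈ Tm f b,
        C s((f.1 a, i), (f.1 b, j)) = f.2) →
      (P * Fintype.card α < (∑ f : ((α → V) × Fin r), (D f).card) + j) →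
      ((2 * t^2 * P^(t+1) + t) * (2 * P^(t+1))^j ≤ m) →
      HasMonoCanonicalBlowup G H n t r C := by
  intro j
  induction j with
  | zero =>
    intro m S Tm D hsz hcards hqual hinv1 hinv2 hcount hm
    exfalso
    have hle : (∑ f : ((α → V) × Fin r), (D f).card) ≤ P * Fintype.card α := by
      calc ∑ f : ((α → V) × Fin r), (D f).card
          ≤ ∑ _f : ((α → V) × Fin r), Fintype.card α :=
            Finset.sum_le_sum fun f _ => by
              simpa using Finset.card_le_card (Finset.subset_univ (D f))
        _ = Fintype.card ((α → V) × Fin r) * Fintype.card α := by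
            rw [Finset.sum_const, smul_eq_mul, card_univ]
        _ = P * Fintype.card α := by
            rw [hPdef, Fintype.card_prod, Fintype.card_fun, Fintype.card_fin]
    omega
  | succ j ih =>
    intro m S Tm D hsz hcards hqual hinv1 hinv2 hcount hm
    by_cases hdone : ∃ f : (α → V) × Fin r, Qual G H f.1 ∧ D f = Finset.univ
    · obtain ⟨f, hQf, hDf⟩ := hdone
      apply extract G H C f hQf (Tm f)
      · intro a
        exact hcards f a (hDf ▸ Finset.mem_univ a)
      · intro a b hab i hi j' hj'
        exact hinv2 f a (hDf ▸ Finset.mem_univ a) b (hDf ▸ Finset.mem_univ b) hab i hi j' hj'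
    · have hm0 : 0 < m := lt_of_lt_of_le (by positivity) hm
      obtain ⟨φ, c, hQ, hcp⟩ := refresh G H C hGH hm0 S hsz y0
      rw [← hPdef] at hcp
      set f0 : (α → V) × Fin r := (φ, c) with hf0
      have hDne : D f0 ≠ Finset.univ := fun h => hdone ⟨f0, hQ, h⟩
      obtain ⟨astar, hastar⟩ : ∃ a, a ∉ D f0 := by
        by_contra hall
        push_neg at hall
        exact hDne (Finset.eq_univ_iff_forall.2 hall)
      have hmbig : 2 * t^2 * P^(t+1) ≤ m := by
        calc 2*t^2*P^(t+1) ≤ 2*t^2*P^(t+1) + t := Nat.le_add_right _ _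
          _ ≤ (2*t^2*P^(t+1)+t) * (2*P^(t+1))^(j+1) :=
              Nat.le_mul_of_pos_right _ (by positivity)
          _ ≤ m := hm
      obtain ⟨T, hTsub, hTcard, S', hS'sub, hS'card, hTcol⟩ :=
        drc H C ht y0 hPpos S hsz hQ.1 astar hcp hmbig
      set D' := Function.update D f0 (insert astar (D f0)) with hD'
      set Tm' := Function.update Tm f0 (Function.update (Tm f0) astar T) with hTm'
      apply ih (m / (2 * P^(t+1))) S' Tm' D' hS'card
      -- hcards
      · intro f a haD'
        by_cases hf : f = f0
        · subst hf
          rw [hTm', Function.update_self]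
          rw [hD', Function.update_self] at haD'
          rcases Finset.mem_insert.1 haD' with ha | haD
          · rw [ha, Function.update_self]
            exact hTcard
          · have hane : a ≠ astar := fun h => hastar (h ▸ haD)
            rw [Function.update_of_ne hane]
            exact hcards f0 a haD
        · rw [hTm', Function.update_of_ne hf]
          rw [hD', Function.update_of_ne hf] at haD'
          exact hcards f a haD'
      -- hqual
      · intro f hfne
        by_cases hf : f = f0
        · subst hf
          exact hQ
        · rw [hD', Function.update_of_ne hf] at hfne
          exact hqual f hfne
      -- hinv1
      · intro f a haD' b hab i hi y hy
        by_cases hf : f = f0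
        · subst hf
          rw [hD', Function.update_self] at haD'
          rw [hTm', Function.update_self] at hi
          rcases Finset.mem_insert.1 haD' with ha | haD
          · rw [ha] at hi hab ⊢
            rw [Function.update_self] at hi
            exact hTcol b hab i hi y hy
          · have hane : a ≠ astar := fun h => hastar (h ▸ haD)
            rw [Function.update_of_ne hane] at hi
            exact hinv1 f0 a haD b hab i hi y (hS'sub _ hy)
        · rw [hD', Function.update_of_ne hf] at haD'
          rw [hTm', Function.update_of_ne hf] at hi
          exact hinv1 f a haD' b hab i hi y (hS'sub _ hy)
      -- hinv2
      · intro f a haD' b hbD' hab i hi j' hj'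
        by_cases hf : f = f0
        · subst hf
          rw [hD', Function.update_self] at haD' hbD'
          rw [hTm', Function.update_self] at hi hj'
          rcases Finset.mem_insert.1 haD' with ha | haD
          · rcases Finset.mem_insert.1 hbD' with hb | hbD
            · exfalso
              rw [ha, hb] at hab
              exact H.loopless.irrefl astar hab
            · have hbne : b ≠ astar := fun h => hastar (h ▸ hbD)
              rw [ha] at hi hab ⊢
              rw [Function.update_self] at hi
              rw [Function.update_of_ne hbne] at hj'
              rw [Sym2.eq_swap]
              exact hinv1 f0 b hbD astar hab.symm j' hj' i (hTsub hi)
          · have hane : a ≠ astar := fun h => hastar (h ▸ haD)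
            rw [Function.update_of_ne hane] at hi
            rcases Finset.mem_insert.1 hbD' with hb | hbD
            · rw [hb] at hj' hab ⊢
              rw [Function.update_self] at hj'
              exact hinv1 f0 a haD astar hab i hi j' (hTsub hj')
            · have hbne : b ≠ astar := fun h => hastar (h ▸ hbD)
              rw [Function.update_of_ne hbne] at hj'
              exact hinv2 f0 a haD b hbD hab i hi j' hj'
        · rw [hD', Function.update_of_ne hf] at haD' hbD'
          rw [hTm', Function.update_of_ne hf] at hi hj'
          exact hinv2 f a haD' b hbD' hab i hi j' hj'
      -- hcount
      · have hsum' : ∑ f : ((α → V) × Fin r), (D' f).card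
            = (∑ f : ((α → V) × Fin r), (D f).card) + 1 := by
          rw [← Finset.add_sum_erase Finset.univ (fun f => (D' f).card) (Finset.mem_univ f0),
            ← Finset.add_sum_erase Finset.univ (fun f => (D f).card) (Finset.mem_univ f0)]
          have h1 : (D' f0).card = (D f0).card + 1 := by
            rw [hD', Function.update_self, Finset.card_insert_of_notMem hastar]
          have h2 : ∀ f ∈ Finset.univ.erase f0, (D' f).card = (D f).card := by
            intro f hf
            rw [hD', Function.update_of_ne (Finset.ne_of_mem_erase hf)]
          rw [h1, Finset.sum_congr rfl h2]
          omega
        rw [hsum']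
        omega
      -- hm
      · rw [Nat.le_div_iff_mul_le (by positivity)]
        calc (2*t^2*P^(t+1)+t) * (2*P^(t+1))^j * (2*P^(t+1))
            = (2*t^2*P^(t+1)+t) * (2*P^(t+1))^(j+1) := by rw [pow_succ]; ring
          _ ≤ m := hm

end Engine
end SouzaProof


/-- Souza's theorem, Theorem 1.1. If `G →_r H`, then there is a constant
`c = c(G,H,r)` such that `B_r(G → H; t) ≤ c^t` for every positive integer `t`. -/
theorem souza_exponential_upper_bound
    (α V : Type) [Fintype α] [Fintype V] (H : SimpleGraph α) (G : SimpleGraph V)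
    (r : ℕ) (hr : 1 ≤ r) (hGH : ArrowsFor G H r) :
    ∃ c : ℝ, 0 < c ∧ ∀ t : ℕ, 1 ≤ t →
      ∃ n : ℕ, (n : ℝ) ≤ c ^ t ∧ BlowupArrow G H r n t := by
  classical
  by_cases hα : Nonempty α
  case neg =>
    have hemp : IsEmpty α := not_nonempty_iff.1 hα
    refine ⟨1, one_pos, fun t ht => ⟨0, by norm_num, fun C => ?_⟩⟩
    exact ⟨fun a => isEmptyElim a, fun a => isEmptyElim a, ⟨0, hr⟩,
      fun a => isEmptyElim a, fun a => isEmptyElim a, fun a => isEmptyElim a⟩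
  case pos =>
    obtain ⟨a0⟩ := hα
    have hV : Nonempty V := by
      obtain ⟨f, c, hinj, _⟩ := hGH fun _ => ⟨0, hr⟩
      exact ⟨f a0⟩
    set k := Fintype.card α with hk
    set P := Fintype.card V ^ k * r with hP
    have hPpos : 0 < P := Nat.mul_pos (pow_pos Fintype.card_pos _) hr
    have hP2 : 0 < P^2 := pow_pos hPpos _
    set A := P * k + 1 with hA
    have hcpos : 0 < (12 * P^2) * (2 * P^2)^A :=
      Nat.mul_pos (Nat.mul_pos (by norm_num) hP2)
        (pow_pos (Nat.mul_pos (by norm_num) hP2) _)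
    refine ⟨(((12 * P^2) * (2 * P^2)^A : ℕ) : ℝ), by exact_mod_cast hcpos, fun t ht => ?_⟩
    set Q := 2 * P^(t+1) with hQ
    set R := 2 * t^2 * P^(t+1) + t with hR
    have hQpos : 0 < Q := by positivity
    have hnpos : 0 < R * Q^A := by positivity
    -- the numeric bound
    have hP1 : 1 ≤ P := hPpos
    have hPt : P^(t+1) ≤ P^(2*t) := Nat.pow_le_pow_right hPpos (by omega)
    have ht4 : t^2 ≤ 4^t := by
      calc t^2 ≤ (2^t)^2 := Nat.pow_le_pow_left (Nat.lt_two_pow_self (n := t)).le 2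
        _ = 4^t := by rw [← pow_mul, mul_comm, pow_mul]; norm_num
    have hQb : Q ≤ (2*P^2)^t := by
      calc Q = 2 * P^(t+1) := hQ
        _ ≤ 2^t * P^(2*t) := by
            apply Nat.mul_le_mul ?_ hPt
            calc 2 = 2^1 := (pow_one 2).symm
              _ ≤ 2^t := Nat.pow_le_pow_right (by norm_num) ht
        _ = (2*P^2)^t := by ring
    have hRb : R ≤ (12*P^2)^t := by
      have h1 : t ≤ t^2 * P^(t+1) := by
        calc t ≤ t^2 := by nlinarith
          _ ≤ t^2 * P^(t+1) := Nat.le_mul_of_pos_right _ (by positivity)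
      have h2 : R ≤ 3 * t^2 * P^(t+1) := by
        rw [hR]
        have h3 : 2 * t^2 * P^(t+1) + t ≤ 2 * t^2 * P^(t+1) + t^2 * P^(t+1) :=
          Nat.add_le_add_left h1 _
        exact h3.trans (le_of_eq (by ring))
      calc R ≤ 3 * t^2 * P^(t+1) := h2
        _ ≤ 3^t * 4^t * P^(2*t) := by
            apply Nat.mul_le_mul (Nat.mul_le_mul ?_ ht4) hPt
            calc 3 = 3^1 := (pow_one 3).symm
              _ ≤ 3^t := Nat.pow_le_pow_right (by norm_num) ht
        _ = (12*P^2)^t := by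
            rw [← Nat.mul_pow 3 4 t]
            have h12 : (3*4 : ℕ) = 12 := by norm_num
            rw [h12]
            ring
    have hbound : R * Q^A ≤ ((12 * P^2) * (2 * P^2)^A)^t := by
      calc R * Q^A ≤ (12*P^2)^t * ((2*P^2)^t)^A :=
            Nat.mul_le_mul hRb (Nat.pow_le_pow_left hQb A)
        _ = ((12 * P^2) * (2 * P^2)^A)^t := by
            rw [mul_pow (12 * P^2) ((2 * P^2)^A) t, pow_right_comm]
    refine ⟨R * Q^A, ?_, ?_⟩
    · have := (Nat.cast_le (α := ℝ)).2 hbound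
      calc ((R * Q^A : ℕ) : ℝ) ≤ (((12 * P^2) * (2 * P^2)^A : ℕ)^t : ℕ) := by exact_mod_cast this
        _ = (((12 * P^2) * (2 * P^2)^A : ℕ) : ℝ)^t := by push_cast; ring
    · intro C
      refine SouzaProof.main_ind G H C hGH ⟨0, hnpos⟩ ht P hP hPpos A (R * Q^A)
        (fun _ => Finset.univ) (fun _ _ => ∅) (fun _ => ∅)
        (fun v => by simp) (fun f a ha => absurd ha (Finset.notMem_empty a))
        (fun f hf => absurd hf Finset.not_nonempty_empty)
        (fun f a ha => absurd ha (Finset.notMem_empty a))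
        (fun f a ha => absurd ha (Finset.notMem_empty a))
        ?_ ?_
      · simp [hA, hk]
      · exact le_of_eq rfl
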